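/- arXiv:1003.4241 — 2 statements merged into one kernel-verified Lean document; each statement's English description precedes it below -/
import Mathlib

section
/- Let B be a commutative ring, I an ideal of B, and M, N B-modules. If there exists an N-regular sequence of length 2 contained in I, then the B-module Hom_B(M, N) also admits a regular sequence of length 2 contained in I (i.e., the same two elements form a Hom_B(M,N)-regular sequence). -/
open Pointwise

private lemma mem_smul_top_iff_exists {R M : Type*} [CommRing R] [AddCommGroup M]
    [Module R M] (r : R) (x : M) :
    x ∈ r • (⊤ : Submodule R M) ↔ ∃ y, r • y = x := by
  rw [← SetLike.mem_coe, Submodule.coe_pointwise_smul, Set.mem_smul_set]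
  simp

/-- If `x₁, x₂ ∈ I` form an `N`-regular sequence, then they also form a
`Hom_B(M, N)`-regular sequence. -/
theorem hom_isWeaklyRegular_of_isWeaklyRegular
    (B : Type*) [CommRing B] (I : Ideal B)
    (M N : Type*) [AddCommGroup M] [Module B M] [AddCommGroup N] [Module B N]
    (x₁ x₂ : B) (hx₁ : x₁ ∈ I) (hx₂ : x₂ ∈ I)
    (hreg : RingTheory.Sequence.IsWeaklyRegular N [x₁, x₂]) :
    RingTheory.Sequence.IsWeaklyRegular (M →ₗ[B] N) [x₁, x₂] := by
  rw [RingTheory.Sequence.isWeaklyRegular_cons_iff,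
    RingTheory.Sequence.isWeaklyRegular_singleton_iff] at hreg ⊢
  obtain ⟨h₁, h₂⟩ := hreg
  constructor
  · intro f f' h
    ext m
    exact h₁ (congrArg (fun φ : M →ₗ[B] N => φ m) h)
  · rw [isSMulRegular_quotient_iff_mem_of_smul_mem] at h₂ ⊢
    intro f hf
    have hex : ∀ m, ∃ n, x₁ • n = f m := by
      intro m
      rw [← mem_smul_top_iff_exists]
      refine h₂ (f m) ?_
      rw [mem_smul_top_iff_exists] at hf ⊢
      obtain ⟨g, hg⟩ := hf
      exact ⟨g m, congrArg (fun φ : M →ₗ[B] N => φ m) hg⟩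
    choose g hg using hex
    have hadd : ∀ m m', g (m + m') = g m + g m' := by
      intro m m'
      apply h₁
      show x₁ • _ = x₁ • _
      rw [hg, smul_add, hg, hg, map_add]
    have hsmul : ∀ (c : B) m, g (c • m) = c • g m := by
      intro c m
      apply h₁
      show x₁ • _ = x₁ • _
      rw [hg, smul_comm, hg, map_smul]
    rw [mem_smul_top_iff_exists]
    exact ⟨⟨⟨g, hadd⟩, hsmul⟩, by ext m; exact hg m⟩
end

section
/- Let R be a Noetherian local ring satisfying Serre's condition (S₂) (so R has no associated primes and depth R_p ≥ min(2, dim R_p) for all primes p), and let M be a finite R-module. Then Hom_R(M, R) satisfies (S₂): for every prime p in the support of Hom_R(M,R), depth (Hom_R(M,R))_p ≥ min(2, dim R_p). -/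
universe u

open RingTheory.Sequence Submodule Pointwise

section Aux

variable {B K : Type*} [CommRing B] [AddCommGroup K] [Module B K]

/-- A regular element of `W` acts regularly on `Hom(K, W)`. -/
lemma isSMulRegular_hom {W : Type*} [AddCommGroup W] [Module B W] {y : B}
    (hy : IsSMulRegular W y) : IsSMulRegular (K →ₗ[B] W) y := fun f g h =>
  LinearMap.ext fun m => hy (by simpa using LinearMap.congr_fun h m)

lemma hom_mem_smul_top {x : B} (hx : IsSMulRegular B x) {f : K →ₗ[B] B}
    (hf : ∀ m, f m ∈ x • (⊤ : Submodule B B)) :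
    f ∈ x • (⊤ : Submodule B (K →ₗ[B] B)) := by
  choose g hg hg' using fun m => Set.mem_smul_set.mp
    (show f m ∈ x • ((⊤ : Submodule B B) : Set B) from hf m)
  let G : K →ₗ[B] B :=
    { toFun := g
      map_add' := fun a b => hx (by
        show x • g (a + b) = x • (g a + g b)
        rw [hg' (a + b), map_add, ← hg' a, ← hg' b, smul_add])
      map_smul' := fun c a => hx (by
        show x • g (c • a) = x • ((RingHom.id B) c • g a)
        rw [hg' (c • a), map_smul, RingHom.id_apply, ← hg' a, smul_comm]) }
  have : f = x • G := LinearMap.ext fun m => (hg' m).symm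
  rw [this]
  exact Submodule.smul_mem_pointwise_smul _ _ _ mem_top

lemma isWeaklyRegular_hom_pair {x y : B} (hx : IsSMulRegular B x)
    (hy : IsSMulRegular (QuotSMulTop x B) y) :
    IsWeaklyRegular (K →ₗ[B] B) [x, y] := by
  rw [isWeaklyRegular_cons_iff]
  refine ⟨isSMulRegular_hom hx, ?_⟩
  rw [isWeaklyRegular_cons_iff]
  refine ⟨?_, IsWeaklyRegular.nil _ _⟩
  let ψ : (K →ₗ[B] B) →ₗ[B] (K →ₗ[B] QuotSMulTop x B) :=
    LinearMap.llcomp B K B (QuotSMulTop x B) (Submodule.mkQ _)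
  have hker : LinearMap.ker ψ ≤ x • (⊤ : Submodule B (K →ₗ[B] B)) := by
    intro f hf
    refine hom_mem_smul_top hx fun m => ?_
    have := LinearMap.congr_fun (LinearMap.mem_ker.mp hf) m
    rw [← Submodule.Quotient.mk_eq_zero]
    simpa [ψ, Submodule.mkQ_apply] using this
  have hker' : x • (⊤ : Submodule B (K →ₗ[B] B)) ≤ LinearMap.ker ψ := by
    intro f hf
    obtain ⟨g, -, rfl⟩ := Set.mem_smul_set.mp hf
    refine LinearMap.mem_ker.mpr (LinearMap.ext fun m => ?_)
    show Submodule.mkQ _ ((x • g) m) = 0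
    rw [Submodule.mkQ_apply, Submodule.Quotient.mk_eq_zero]
    exact Submodule.smul_mem_pointwise_smul _ _ _ Submodule.mem_top
  let Φ := Submodule.liftQ (x • (⊤ : Submodule B (K →ₗ[B] B))) ψ hker'
  have hinj : Function.Injective Φ :=
    LinearMap.ker_eq_bot.mp (Submodule.ker_liftQ_eq_bot _ _ _ hker)
  intro a b hab
  exact hinj ((isSMulRegular_hom hy) (show y • Φ a = y • Φ b by
    rw [← map_smul, ← map_smul]; exact congrArg Φ hab))

/-- Upgrade an `R`-linear equivalence between modules over a localization to a linear
equivalence over the localization. -/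
noncomputable def extEquiv {R : Type*} [CommSemiring R] (S : Submonoid R) (A : Type*)
    [CommSemiring A] [Algebra R A] [IsLocalization S A] {X Y : Type*}
    [AddCommMonoid X] [Module R X] [Module A X] [IsScalarTower R A X]
    [AddCommMonoid Y] [Module R Y] [Module A Y] [IsScalarTower R A Y]
    (e : X ≃ₗ[R] Y) : X ≃ₗ[A] Y :=
  LinearEquiv.ofLinear (e.toLinearMap.extendScalarsOfIsLocalization S A)
    (e.symm.toLinearMap.extendScalarsOfIsLocalization S A)
    (by ext x; simp) (by ext x; simp)

end Aux

/-- The depth of a module over a local ring. -/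
noncomputable def moduleDepth (R : Type*) [CommRing R] [IsLocalRing R]
    (M : Type*) [AddCommGroup M] [Module R M] : ℕ∞ :=
  sSup {n : ℕ∞ | ∃ rs : List R, (rs.length : ℕ∞) = n ∧
    (∀ x ∈ rs, x ∈ IsLocalRing.maximalIdeal R) ∧ RingTheory.Sequence.IsRegular M rs}

/-- A module `M` over `R` satisfies Serre's condition `(S₂)` if
`depth M_p ≥ min(2, dim R_p)` for every prime `p` in the support of `M`. -/
def SatisfiesS2 (R : Type u) [CommRing R] (M : Type u) [AddCommGroup M] [Module R M] : Prop :=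
  ∀ p : PrimeSpectrum R, p ∈ Module.support R M →
    min 2 (ringKrullDim (Localization.AtPrime p.asIdeal)) ≤
      (moduleDepth (Localization.AtPrime p.asIdeal)
        (LocalizedModule p.asIdeal.primeCompl M) : WithBot ℕ∞)

/-- If a Noetherian local ring `R` satisfies `(S₂)` and `M` is a finite `R`-module, then
`Hom_R(M, R)` satisfies `(S₂)`. -/
theorem hom_satisfiesS2 (R : Type u) [CommRing R] [IsNoetherianRing R] [IsLocalRing R]
    (hR : SatisfiesS2 R R)
    (M : Type u) [AddCommGroup M] [Module R M] [Module.Finite R M] :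
    SatisfiesS2 R (M →ₗ[R] R) := by
  intro p hp
  set S : Submonoid R := p.asIdeal.primeCompl with hS
  set A := Localization.AtPrime p.asIdeal with hA
  set K := LocalizedModule S M with hK
  set N := LocalizedModule S (M →ₗ[R] R) with hN
  set L := LocalizedModule S R with hL
  -- instances
  haveI : Module.FinitePresentation R M := Module.finitePresentation_of_finite R M
  haveI : IsNoetherianRing A := IsLocalization.isNoetherianRing S A ‹IsNoetherianRing R›
  haveI : Module.Finite A K := Module.Finite.of_isLocalizedModule S (LocalizedModule.mkLinearMap S M)
  haveI hNtN : Nontrivial N := hp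
  -- the two linear equivalences
  let e₁ : L ≃ₗ[A] A := extEquiv S A (IsLocalizedModule.iso S (Algebra.linearMap R A))
  let F := IsLocalizedModule.mapExtendScalars S (LocalizedModule.mkLinearMap S M)
    (Algebra.linearMap R A) A
  let e₂ : N ≃ₗ[A] (K →ₗ[A] A) := extEquiv S A (IsLocalizedModule.iso S F)
  haveI : Nontrivial (K →ₗ[A] A) := e₂.symm.toEquiv.nontrivial
  -- extraction of regular sequences on `A` from `moduleDepth A L`
  have ex : ∀ t : ℕ, 0 < t → (t : ℕ∞) ≤ moduleDepth A L →
      ∃ rs : List A, t ≤ rs.length ∧ (∀ r ∈ rs, r ∈ IsLocalRing.maximalIdeal A) ∧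
        RingTheory.Sequence.IsRegular A rs := by
    intro t ht hle
    have hlt : ((t - 1 : ℕ) : ℕ∞) < moduleDepth A L :=
      lt_of_lt_of_le (by exact_mod_cast Nat.sub_lt ht one_pos) hle
    rw [moduleDepth] at hlt
    obtain ⟨n, ⟨rs, hlen, hmem, hreg⟩, hlt'⟩ := lt_sSup_iff.mp hlt
    refine ⟨rs, ?_, hmem, (e₁.isRegular_congr rs).mp hreg⟩
    rw [← hlen] at hlt'
    have : t - 1 < rs.length := by exact_mod_cast hlt'
    omega
  -- depth of N is at least min 2 (depth of L)
  have key : ∀ t : ℕ, t ≤ 2 → (t : ℕ∞) ≤ moduleDepth A L → (t : ℕ∞) ≤ moduleDepth A N := by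
    intro t ht2 hle
    rcases Nat.eq_zero_or_pos t with rfl | ht
    · exact_mod_cast zero_le
    obtain ⟨rs, hlen, hmem, hreg⟩ := ex t ht hle
    -- take the first `t` elements
    have hw : IsWeaklyRegular (K →ₗ[A] A) (rs.take t) := by
      obtain ⟨hwr, -⟩ := (isWeaklyRegular_append_iff A (rs.take t) (rs.drop t)).mp
        (by rw [List.take_append_drop]; exact hreg.toIsWeaklyRegular)
      have hlt : (rs.take t).length = t := by rw [List.length_take]; omega
      interval_cases t
      · obtain ⟨x, hrs⟩ := List.length_eq_one_iff.mp hlt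
        rw [hrs] at hwr ⊢
        rw [isWeaklyRegular_cons_iff] at hwr
        exact (isWeaklyRegular_cons_iff _ _ _).mpr
          ⟨isSMulRegular_hom hwr.1, IsWeaklyRegular.nil _ _⟩
      · obtain ⟨x, y, hrs⟩ := List.length_eq_two.mp hlt
        rw [hrs] at hwr ⊢
        rw [isWeaklyRegular_cons_iff, isWeaklyRegular_cons_iff] at hwr
        exact isWeaklyRegular_hom_pair hwr.1 hwr.2.1
    have hmem' : ∀ r ∈ rs.take t, r ∈ IsLocalRing.maximalIdeal A :=
      fun r hr => hmem r (List.mem_of_mem_take hr)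
    have hreg' : RingTheory.Sequence.IsRegular (K →ₗ[A] A) (rs.take t) :=
      (IsLocalRing.isRegular_iff_isWeaklyRegular_of_subset_maximalIdeal hmem').mpr hw
    have hregN : RingTheory.Sequence.IsRegular N (rs.take t) :=
      (e₂.isRegular_congr _).mpr hreg'
    refine le_sSup ⟨rs.take t, ?_, hmem', hregN⟩
    have : (rs.take t).length = t := by rw [List.length_take]; omega
    rw [this]
  -- put things together
  have hpR : p ∈ Module.support R R := by
    rw [Module.mem_support_iff']
    refine ⟨1, fun r hr h => hr ?_⟩
    have hr0 : r = 0 := by simpa using h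
    rw [hr0]; exact zero_mem _
  have hA2 := hR p hpR
  show min 2 (ringKrullDim A) ≤ ((moduleDepth A N : ℕ∞) : WithBot ℕ∞)
  have h21 : (2 : ℕ∞) = Order.succ 1 := by rw [Order.succ_eq_add_one]; norm_num
  have h10 : (1 : ℕ∞) = Order.succ 0 := by rw [Order.succ_eq_add_one]; norm_num
  by_cases h2 : (2 : ℕ∞) ≤ moduleDepth A L
  · have := key 2 le_rfl (by exact_mod_cast h2)
    refine le_trans (min_le_left _ _) ?_
    have h2' := WithBot.coe_le_coe.mpr this
    exact le_trans (le_of_eq (by norm_num)) h2'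
  · by_cases h1 : (1 : ℕ∞) ≤ moduleDepth A L
    · have hN1 := key 1 (by norm_num) (by exact_mod_cast h1)
      have hL1 : moduleDepth A L ≤ 1 := Order.le_of_lt_succ
        (show moduleDepth A L < Order.succ 1 by rw [← h21]; exact not_le.mp h2)
      calc min 2 (ringKrullDim A) ≤ ((moduleDepth A L : ℕ∞) : WithBot ℕ∞) := hA2
        _ ≤ ((1 : ℕ∞) : WithBot ℕ∞) := by exact_mod_cast hL1
        _ ≤ _ := by exact_mod_cast hN1
    · have hL0 : moduleDepth A L = 0 :=
        nonpos_iff_eq_zero.mp (Order.le_of_lt_succ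
          (show moduleDepth A L < Order.succ 0 by rw [← h10]; exact not_le.mp h1))
      calc min 2 (ringKrullDim A) ≤ ((moduleDepth A L : ℕ∞) : WithBot ℕ∞) := hA2
        _ = ((0 : ℕ∞) : WithBot ℕ∞) := by rw [hL0]
        _ ≤ _ := by exact_mod_cast zero_le
end
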